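/- With A = A_{n,m} ⊆ B = k[x_1,…,x_n,y_1,…,y_m,z] and the G_a-action z ↦ z + t y_1, the invariant ring B^{G_a} = k[x_1,…,x_n,y_1,…,y_m] is algebraic over A^{G_a} (they have the same fraction field) but is not integral over A^{G_a}. -/

import Mathlib

open MvPolynomial

/-- The variables of `B_{n,m} = k[x_1,…,x_n,y_1,…,y_m,z]`. -/
abbrev BonnetVars (n m : ℕ) := Fin n ⊕ Fin m ⊕ Unit

variable (k : Type*) [Field k] (n m : ℕ)

/-- The variable `x_i`. -/
noncomputable def Xv (i : Fin n) : MvPolynomial (BonnetVars n m) k := X (Sum.inl i)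
/-- The variable `y_j`. -/
noncomputable def Yv (j : Fin m) : MvPolynomial (BonnetVars n m) k := X (Sum.inr (Sum.inl j))
/-- The variable `z`. -/
noncomputable def Zv : MvPolynomial (BonnetVars n m) k := X (Sum.inr (Sum.inr ()))

/-- The generators of the subalgebra `A_{n,m}`: the `y_j`, `z`, the polynomials
`x_i^2 + x_i z` and `x_i^3 + x_i^2 z`, and the monomials `x_1^{i_1}⋯x_n^{i_n} y_j`
with all `i_k ≤ 1`. -/
noncomputable def AnmGens : Set (MvPolynomial (BonnetVars n m) k) :=
  Set.range (Yv k n m) ∪ {Zv k n m}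
    ∪ Set.range (fun i => Xv k n m i ^ 2 + Xv k n m i * Zv k n m)
    ∪ Set.range (fun i => Xv k n m i ^ 3 + Xv k n m i ^ 2 * Zv k n m)
    ∪ {p | ∃ (s : Finset (Fin n)) (j : Fin m), p = (∏ i ∈ s, Xv k n m i) * Yv k n m j}

/-- The subalgebra `A_{n,m}` of `B_{n,m}`. -/
noncomputable def Anm : Subalgebra k (MvPolynomial (BonnetVars n m) k) :=
  Algebra.adjoin k (AnmGens k n m)

/-- The `G_a`-action `φ_t` on `B_{n,m}`: `x_i ↦ x_i`, `y_j ↦ y_j`,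
`z ↦ z + t y_1` (assuming `m ≥ 1`). -/
noncomputable def phiGa (hm : 0 < m) (t : k) :
    MvPolynomial (BonnetVars n m) k →ₐ[k] MvPolynomial (BonnetVars n m) k :=
  MvPolynomial.aeval (fun w => match w with
    | Sum.inl i => Xv k n m i
    | Sum.inr (Sum.inl j) => Yv k n m j
    | Sum.inr (Sum.inr _) => Zv k n m + MvPolynomial.C t * Yv k n m ⟨0, hm⟩)

/-! ### Auxiliary lemmas -/

@[simp] lemma phiGa_Xv (hm : 0 < m) (t : k) (i : Fin n) :
    phiGa k n m hm t (Xv k n m i) = Xv k n m i := by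
  simp [phiGa, Xv]

@[simp] lemma phiGa_Yv (hm : 0 < m) (t : k) (j : Fin m) :
    phiGa k n m hm t (Yv k n m j) = Yv k n m j := by
  simp [phiGa, Yv]

@[simp] lemma phiGa_Zv (hm : 0 < m) (t : k) :
    phiGa k n m hm t (Zv k n m) = Zv k n m + MvPolynomial.C t * Yv k n m ⟨0, hm⟩ := by
  simp [phiGa, Zv]

lemma Yv_mem_Anm (j : Fin m) : Yv k n m j ∈ Anm k n m :=
  Algebra.subset_adjoin (Or.inl (Or.inl (Or.inl (Or.inl ⟨j, rfl⟩))))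

lemma Yv_mul_Xv_mem_Anm (i : Fin n) (j : Fin m) :
    Yv k n m j * Xv k n m i ∈ Anm k n m := by
  have h : Yv k n m j * Xv k n m i = (∏ i' ∈ {i}, Xv k n m i') * Yv k n m j := by
    rw [Finset.prod_singleton]; ring
  rw [h]
  exact Algebra.subset_adjoin (Or.inr ⟨{i}, j, rfl⟩)

/-- The subalgebra of `b` such that `y_1^N b ∈ A_{n,m}` for some `N`. -/
noncomputable def SN (hm : 0 < m) : Subalgebra k (MvPolynomial (BonnetVars n m) k) where
  carrier := {b | ∃ N : ℕ, Yv k n m ⟨0, hm⟩ ^ N * b ∈ Anm k n m}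
  mul_mem' := by
    rintro a b ⟨N, hN⟩ ⟨M, hM⟩
    refine ⟨N + M, ?_⟩
    rw [show Yv k n m ⟨0, hm⟩ ^ (N + M) * (a * b)
        = (Yv k n m ⟨0, hm⟩ ^ N * a) * (Yv k n m ⟨0, hm⟩ ^ M * b) by ring]
    exact mul_mem hN hM
  one_mem' := ⟨0, by simpa using one_mem (Anm k n m)⟩
  add_mem' := by
    rintro a b ⟨N, hN⟩ ⟨M, hM⟩
    refine ⟨N + M, ?_⟩
    rw [show Yv k n m ⟨0, hm⟩ ^ (N + M) * (a + b)
        = Yv k n m ⟨0, hm⟩ ^ M * (Yv k n m ⟨0, hm⟩ ^ N * a)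
          + Yv k n m ⟨0, hm⟩ ^ N * (Yv k n m ⟨0, hm⟩ ^ M * b) by ring]
    exact add_mem (mul_mem (pow_mem (Yv_mem_Anm k n m _) M) hN)
      (mul_mem (pow_mem (Yv_mem_Anm k n m _) N) hM)
  zero_mem' := ⟨0, by simpa using zero_mem (Anm k n m)⟩
  algebraMap_mem' := fun r => ⟨0, by simpa using (Anm k n m).algebraMap_mem r⟩

lemma supported_le_SN (hm : 0 < m) :
    MvPolynomial.supported k {w : BonnetVars n m | w ≠ Sum.inr (Sum.inr ())}
      ≤ SN k n m hm := by
  rw [MvPolynomial.supported_eq_adjoin_X]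
  apply Algebra.adjoin_le
  rintro x ⟨w, hw, rfl⟩
  rcases w with i | j | u
  · exact ⟨1, by rw [pow_one]; exact Yv_mul_Xv_mem_Anm k n m i ⟨0, hm⟩⟩
  · exact ⟨0, by simpa [Yv] using Yv_mem_Anm k n m j⟩
  · exact absurd rfl hw

lemma phiGa_fixed_of_supported (hm : 0 < m) (t : k) {b : MvPolynomial (BonnetVars n m) k}
    (hb : b ∈ MvPolynomial.supported k {w : BonnetVars n m | w ≠ Sum.inr (Sum.inr ())}) :
    phiGa k n m hm t b = b := by
  rw [MvPolynomial.supported_eq_adjoin_X] at hb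
  induction hb using Algebra.adjoin_induction with
  | mem x hx =>
    obtain ⟨w, hw, rfl⟩ := hx
    rcases w with i | j | u
    · exact phiGa_Xv k n m hm t i
    · exact phiGa_Yv k n m hm t j
    · exact absurd rfl hw
  | algebraMap r => exact (phiGa k n m hm t).commutes r
  | add x y _ _ hx hy => rw [map_add, hx, hy]
  | mul x y _ _ hx hy => rw [map_mul, hx, hy]

/-- The evaluation `x_i ↦ λ, y_j ↦ 0, z ↦ -λ`. -/
noncomputable def Ehom (lam : k) : MvPolynomial (BonnetVars n m) k →ₐ[k] k :=
  MvPolynomial.aeval (fun w => match w with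
    | Sum.inl _ => lam
    | Sum.inr (Sum.inl _) => 0
    | Sum.inr (Sum.inr _) => -lam)

/-- The evaluation `x_i ↦ 0, y_1 ↦ u, y_j ↦ 0 (j ≠ 1), z ↦ -λ`. -/
noncomputable def Ghom (hm : 0 < m) (u lam : k) :
    MvPolynomial (BonnetVars n m) k →ₐ[k] k :=
  MvPolynomial.aeval (fun w => match w with
    | Sum.inl _ => 0
    | Sum.inr (Sum.inl j) => if j = (⟨0, hm⟩ : Fin m) then u else 0
    | Sum.inr (Sum.inr _) => -lam)

/-- The evaluation `x_i ↦ 0, y_1 ↦ U, y_j ↦ 0 (j ≠ 1), z ↦ -λ` into `k[U]`. -/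
noncomputable def Thom (hm : 0 < m) (lam : k) :
    MvPolynomial (BonnetVars n m) k →ₐ[k] Polynomial k :=
  MvPolynomial.aeval (fun w => match w with
    | Sum.inl _ => 0
    | Sum.inr (Sum.inl j) => if j = (⟨0, hm⟩ : Fin m) then Polynomial.X else 0
    | Sum.inr (Sum.inr _) => Polynomial.C (-lam))

@[simp] lemma Ehom_Xv (lam : k) (i : Fin n) : Ehom k n m lam (Xv k n m i) = lam := by
  simp [Ehom, Xv]

@[simp] lemma Ehom_Yv (lam : k) (j : Fin m) : Ehom k n m lam (Yv k n m j) = 0 := by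
  simp [Ehom, Yv]

@[simp] lemma Ehom_Zv (lam : k) : Ehom k n m lam (Zv k n m) = -lam := by
  simp [Ehom, Zv]

@[simp] lemma Ghom_Xv (hm : 0 < m) (u lam : k) (i : Fin n) :
    Ghom k n m hm u lam (Xv k n m i) = 0 := by
  simp [Ghom, Xv]

@[simp] lemma Ghom_Yv (hm : 0 < m) (u lam : k) (j : Fin m) :
    Ghom k n m hm u lam (Yv k n m j) = if j = (⟨0, hm⟩ : Fin m) then u else 0 := by
  simp [Ghom, Yv]

@[simp] lemma Ghom_Zv (hm : 0 < m) (u lam : k) :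
    Ghom k n m hm u lam (Zv k n m) = -lam := by
  simp [Ghom, Zv]

/-- The two evaluations agree on `A_{n,m}`. -/
lemma Ehom_eq_Ghom_on_Anm (hm : 0 < m) (lam : k) {c : MvPolynomial (BonnetVars n m) k}
    (hc : c ∈ Anm k n m) : Ehom k n m lam c = Ghom k n m hm 0 lam c := by
  unfold Anm at hc
  induction hc using Algebra.adjoin_induction with
  | mem x hx =>
    simp only [AnmGens, Set.mem_union, Set.mem_range, Set.mem_singleton_iff,
      Set.mem_setOf_eq] at hx
    rcases hx with ((((⟨j, rfl⟩ | rfl) | ⟨i, rfl⟩) | ⟨i, rfl⟩) | ⟨s, j, rfl⟩)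
    · simp
    · simp
    · simp; ring
    · simp; ring
    · rw [map_mul, map_mul, Ehom_Yv, Ghom_Yv]; simp
  | algebraMap r => simp [Ehom, Ghom]
  | add x y _ _ hx hy => rw [map_add, map_add, hx, hy]
  | mul x y _ _ hx hy => rw [map_mul, map_mul, hx, hy]

/-- Invariant elements have `λ`-independent `Ghom 0 λ`-evaluation. -/
lemma Ghom_eq_of_invariant (hm : 0 < m) [CharZero k] (lam : k)
    {c : MvPolynomial (BonnetVars n m) k}
    (hc : ∀ t : k, phiGa k n m hm t c = c) :
    Ghom k n m hm 0 lam c = Ghom k n m hm 0 0 c := by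
  have ev1 : ∀ u mu : k, (Thom k n m hm mu c).eval u = Ghom k n m hm u mu c := by
    intro u mu
    have comp1 : (Polynomial.aeval u).comp (Thom k n m hm mu) = Ghom k n m hm u mu := by
      apply MvPolynomial.algHom_ext
      intro w
      rcases w with i | j | v
      · simp [Thom, Ghom]
      · by_cases hj : j = (⟨0, hm⟩ : Fin m) <;> simp [Thom, Ghom, hj]
      · simp [Thom, Ghom]
    have h := DFunLike.congr_fun comp1 c
    rw [AlgHom.comp_apply] at h
    rw [← h]
    exact (congrFun (Polynomial.coe_aeval_eq_eval u) (Thom k n m hm mu c)).symm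
  have key : ∀ u : k, u ≠ 0 →
      (Thom k n m hm lam c).eval u = (Thom k n m hm 0 c).eval u := by
    intro u hu
    rw [ev1 u lam, ev1 u 0]
    have e1 : (Ghom k n m hm u 0).comp (phiGa k n m hm (-(lam / u)))
        = Ghom k n m hm u lam := by
      apply MvPolynomial.algHom_ext
      intro w
      rcases w with i | j | v
      · simp [Ghom, phiGa, Xv]
      · simp [Ghom, phiGa, Yv]
      · simp only [AlgHom.comp_apply]
        show Ghom k n m hm u 0 (phiGa k n m hm (-(lam / u)) (Zv k n m))
          = Ghom k n m hm u lam (Zv k n m)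
        rw [phiGa_Zv, map_add, map_mul, Ghom_Zv, Ghom_Zv, Ghom_Yv]
        have hC : Ghom k n m hm u 0 (C (-(lam / u))) = -(lam / u) := by
          simp [Ghom]
        rw [hC, if_pos rfl]
        field_simp
        simp
    rw [← e1, AlgHom.comp_apply, hc]
  have h2 : Thom k n m hm lam c = Thom k n m hm 0 c := by
    apply Polynomial.eq_of_infinite_eval_eq
    apply Set.Infinite.mono (s := ({0}ᶜ : Set k))
      (fun u hu => key u (by simpa using hu))
    exact (Set.finite_singleton (0 : k)).infinite_compl
  rw [← ev1 0 lam, ← ev1 0 0, h2]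

/-- `B_{n,m}^{G_a} = k[x_1,…,x_n,y_1,…,y_m]` is algebraic over `A_{n,m}^{G_a}`,
but not integral over it. -/
theorem Bnm_Ga_invariants_algebraic_not_integral (hn : 0 < n) (hm : 0 < m) [CharZero k] :
    (∀ b ∈ MvPolynomial.supported k {w : BonnetVars n m | w ≠ Sum.inr (Sum.inr ())},
      ∃ p : Polynomial (MvPolynomial (BonnetVars n m) k), p ≠ 0 ∧
        (∀ i : ℕ, p.coeff i ∈ Anm k n m ∧ ∀ t : k, phiGa k n m hm t (p.coeff i) = p.coeff i) ∧
        Polynomial.eval b p = 0) ∧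
    ¬ (∀ b ∈ MvPolynomial.supported k {w : BonnetVars n m | w ≠ Sum.inr (Sum.inr ())},
      ∃ p : Polynomial (MvPolynomial (BonnetVars n m) k), p.Monic ∧
        (∀ i : ℕ, p.coeff i ∈ Anm k n m ∧ ∀ t : k, phiGa k n m hm t (p.coeff i) = p.coeff i) ∧
        Polynomial.eval b p = 0) := by
  constructor
  · -- algebraicity
    intro b hb
    have hbinv : ∀ t : k, phiGa k n m hm t b = b :=
      fun t => phiGa_fixed_of_supported k n m hm t hb
    obtain ⟨N, hN⟩ := supported_le_SN k n m hm hb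
    set a : MvPolynomial (BonnetVars n m) k := Yv k n m ⟨0, hm⟩ ^ N with ha
    refine ⟨Polynomial.C a * Polynomial.X - Polynomial.C (a * b), ?_, ?_, ?_⟩
    · intro h
      have h1 := congrArg (fun q => Polynomial.coeff q 1) h
      simp only [Polynomial.coeff_sub, Polynomial.coeff_C_mul, Polynomial.coeff_X_one,
        mul_one, Polynomial.coeff_C, Polynomial.coeff_zero] at h1
      norm_num at h1
      exact pow_ne_zero N (MvPolynomial.X_ne_zero (R := k) (σ := BonnetVars n m)
        (Sum.inr (Sum.inl ⟨0, hm⟩))) (by simp only [ha] at h1; exact h1)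
    · have c0 : (Polynomial.C a * Polynomial.X - Polynomial.C (a * b)).coeff 0
          = -(a * b) := by simp
      have c1 : (Polynomial.C a * Polynomial.X - Polynomial.C (a * b)).coeff 1 = a := by
        simp
      have c2 : ∀ i : ℕ, (Polynomial.C a * Polynomial.X - Polynomial.C (a * b)).coeff (i + 2)
          = 0 := by
        intro i
        rw [Polynomial.coeff_sub, Polynomial.coeff_C_mul, Polynomial.coeff_X,
          Polynomial.coeff_C, if_neg (by omega), if_neg (by omega)]
        ring
      intro i
      match i with
      | 0 =>
        refine ⟨by rw [c0]; exact neg_mem hN, fun t => ?_⟩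
        rw [c0, map_neg, map_mul, ha, map_pow, phiGa_Yv, hbinv t]
      | 1 =>
        refine ⟨by rw [c1]; exact pow_mem (Yv_mem_Anm k n m _) N, fun t => ?_⟩
        rw [c1, ha, map_pow, phiGa_Yv]
      | (i + 2) =>
        constructor
        · rw [c2 i]; exact zero_mem _
        · intro t; rw [c2 i, map_zero]
    · simp
  · -- non-integrality
    intro H
    have hXmem : Xv k n m ⟨0, hn⟩ ∈ MvPolynomial.supported k
        {w : BonnetVars n m | w ≠ Sum.inr (Sum.inr ())} := by
      show (X (Sum.inl ⟨0, hn⟩) : MvPolynomial (BonnetVars n m) k) ∈ MvPolynomial.supported k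
        {w : BonnetVars n m | w ≠ Sum.inr (Sum.inr ())}
      exact MvPolynomial.X_mem_supported.mpr (by simp)
    obtain ⟨p, hmon, hco, hev⟩ := H _ hXmem
    have hroot : ∀ lam : k, (p.map (Ghom k n m hm 0 0).toRingHom).eval lam = 0 := by
      intro lam
      have hmapeq : p.map (Ghom k n m hm 0 0).toRingHom
          = p.map (Ehom k n m lam).toRingHom := by
        apply Polynomial.ext
        intro i
        rw [Polynomial.coeff_map, Polynomial.coeff_map]
        exact ((Ehom_eq_Ghom_on_Anm k n m hm lam (hco i).1).trans
          (Ghom_eq_of_invariant k n m hm lam (hco i).2)).symm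
      rw [hmapeq, Polynomial.eval_map]
      have hb : (Ehom k n m lam).toRingHom (Xv k n m ⟨0, hn⟩) = lam :=
        Ehom_Xv k n m lam ⟨0, hn⟩
      have h3 : Polynomial.eval₂ (Ehom k n m lam).toRingHom
          ((Ehom k n m lam).toRingHom (Xv k n m ⟨0, hn⟩)) p
          = (Ehom k n m lam).toRingHom (Polynomial.eval (Xv k n m ⟨0, hn⟩) p) :=
        Polynomial.eval₂_hom _ _
      rw [hb] at h3
      rw [h3, hev, map_zero]
    have hq0 : p.map (Ghom k n m hm 0 0).toRingHom = 0 :=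
      Polynomial.funext (fun r => by rw [hroot r, Polynomial.eval_zero])
    exact (hmon.map (Ghom k n m hm 0 0).toRingHom).ne_zero hq0
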